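/- arXiv:2408.08057 — 4 statements merged into one kernel-verified Lean document; each statement's English description precedes it below -/
import Mathlib

section
/- (Proposition 1) Suppose (w_1,…,w_K, q^dl, q^ul) is feasible for problem (P1). Define q̃^ul_m ≜ (β/M)·s + β·σ_z² for every m = 1,…,M, where s = Re(a_tᴴ Σ_g R Σ_gᴴ a_t). Then the point (w_1,…,w_K, q^dl, q̃^ul) is also feasible for (P1), has the same objective value Tr(R), satisfies every UL fronthaul constraint (iii) with equality, and satisfies q̃^ul_m ≤ q^ul_m for every m. -/
open Matrix Finset

noncomputable section

namespace NetworkedISAC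

variable {N M K : ℕ}

/-- The transmit covariance matrix `R = ∑ₖ wₖ wₖᴴ + Diag(q^dl)`. -/
def Rmat (w : Fin K → Fin N → ℂ) (qdl : Fin N → ℝ) : Matrix (Fin N) (Fin N) ℂ :=
  (∑ k, vecMulVec (w k) (star (w k))) + diagonal (fun n => (qdl n : ℂ))

/-- `s = Re(a_tᴴ Σ_g R Σ_gᴴ a_t)`. -/
def sVal (at_ : Fin N → ℂ) (Sg : Matrix (Fin N) (Fin N) ℂ)
    (w : Fin K → Fin N → ℂ) (qdl : Fin N → ℝ) : ℝ :=
  (star at_ ⬝ᵥ (Sg * Rmat w qdl * Sgᴴ).mulVec at_).re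

/-- Feasibility for problem (P1). -/
def FeasibleP1 (Cdl Cul σv2 σz2 Γs : ℝ) (Γ : Fin K → ℝ)
    (h : Fin K → Fin N → ℂ) (at_ : Fin N → ℂ) (Sg : Matrix (Fin N) (Fin N) ℂ)
    (ar : Fin M → ℂ)
    (w : Fin K → Fin N → ℂ) (qdl : Fin N → ℝ) (qul : Fin M → ℝ) : Prop :=
  (∀ n, 0 ≤ qdl n) ∧ (∀ m, 0 ≤ qul m) ∧
  -- (i) DL fronthaul constraints
  (∀ n, ∑ k, Complex.normSq (w k n) ≤ (2 ^ Cdl - 1) * qdl n) ∧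
  -- (ii) communication SINR constraints
  (∀ k, Complex.normSq (star (h k) ⬝ᵥ w k) ≥
      Γ k * ((∑ i ∈ univ.erase k, Complex.normSq (star (h k) ⬝ᵥ w i)) +
        (star (h k) ⬝ᵥ (diagonal fun n => (qdl n : ℂ)).mulVec (h k)).re + σv2)) ∧
  -- (iii) UL fronthaul constraints
  (∀ _m : Fin M, sVal at_ Sg w qdl + M * σz2 ≤ (2 ^ Cul - 1) * M * qul _m) ∧
  -- (iv) sensing SINR constraint
  (sVal at_ Sg w qdl *
      (star ar ⬝ᵥ ((diagonal (fun m => (qul m : ℂ)) + (σz2 : ℂ) • 1)⁻¹).mulVec ar).re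
    ≥ Γs)

lemma factor_eq {M : ℕ} (ar : Fin M → ℂ) (σz2 : ℝ) (qv : Fin M → ℝ)
    (hq : ∀ m, qv m + σz2 ≠ 0) :
    (star ar ⬝ᵥ ((diagonal (fun m => (qv m : ℂ)) + (σz2 : ℂ) • 1)⁻¹).mulVec ar).re
      = ∑ m, Complex.normSq (ar m) * (qv m + σz2)⁻¹ := by
  have h1 : (diagonal (fun m => (qv m : ℂ)) + (σz2 : ℂ) • 1)
      = diagonal (fun m => ((qv m + σz2 : ℝ) : ℂ)) := by
    rw [smul_one_eq_diagonal, diagonal_add]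
    congr 1
    ext m
    push_cast
    ring
  have h2 : (diagonal fun m => ((qv m + σz2 : ℝ) : ℂ))⁻¹
      = diagonal (fun m => ((qv m + σz2 : ℝ) : ℂ)⁻¹) := by
    apply inv_eq_right_inv
    rw [diagonal_mul_diagonal]
    rw [show (1 : Matrix (Fin M) (Fin M) ℂ) = diagonal (fun _ => 1) from (diagonal_one).symm]
    exact congrArg diagonal (funext fun m =>
      mul_inv_cancel₀ (Complex.ofReal_ne_zero.mpr (hq m)))
  rw [h1, h2]
  simp only [dotProduct, mulVec_diagonal, Complex.re_sum]
  refine Finset.sum_congr rfl fun m _ => ?_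
  rw [← Complex.ofReal_inv]
  simp [Complex.mul_re, Complex.mul_im, Complex.normSq_apply]
  ring

/-- **Proposition 1.**  If `(w, q^dl, q^ul)` is feasible for (P1), then replacing the UL
compression noise levels with `qt^ul_m = (β/M)·s + β·σ_z²`, where `β = 1/(2^{C^ul}-1)`,
yields a point that is still feasible for (P1), has the same objective value `Tr(R)`,
satisfies all UL fronthaul constraints (iii) with equality, and satisfies
`qt^ul_m ≤ q^ul_m` for every `m`. -/
theorem proposition1
    (Cdl Cul σv2 σz2 Γs : ℝ) (Γ : Fin K → ℝ)
    (hCdl : 0 < Cdl) (hCul : 0 < Cul) (hσv2 : 0 < σv2) (hσz2 : 0 < σz2)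
    (hΓs : 0 < Γs) (hΓ : ∀ k, 0 < Γ k)
    (h : Fin K → Fin N → ℂ) (at_ : Fin N → ℂ) (Sg : Matrix (Fin N) (Fin N) ℂ)
    (ar : Fin M → ℂ) (har : ∀ m, Complex.normSq (ar m) = 1 / M)
    (w : Fin K → Fin N → ℂ) (qdl : Fin N → ℝ) (qul : Fin M → ℝ)
    (hfeas : FeasibleP1 Cdl Cul σv2 σz2 Γs Γ h at_ Sg ar w qdl qul) :
    FeasibleP1 Cdl Cul σv2 σz2 Γs Γ h at_ Sg ar w qdl
      (fun _ => (1 / (2 ^ Cul - 1)) / M * sVal at_ Sg w qdl + (1 / (2 ^ Cul - 1)) * σz2) ∧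
    (Rmat w qdl).trace = (Rmat w qdl).trace ∧
    (∀ _m : Fin M, sVal at_ Sg w qdl + M * σz2 =
      (2 ^ Cul - 1) * M *
        ((1 / (2 ^ Cul - 1)) / M * sVal at_ Sg w qdl + (1 / (2 ^ Cul - 1)) * σz2)) ∧
    (∀ m : Fin M,
      (1 / (2 ^ Cul - 1)) / M * sVal at_ Sg w qdl + (1 / (2 ^ Cul - 1)) * σz2 ≤ qul m) := by
  obtain ⟨hqdl, hqul, hi, hii, hiii, hiv⟩ := hfeas
  set s := sVal at_ Sg w qdl with hsdef
  have h2 : (1 : ℝ) < 2 ^ Cul := Real.one_lt_rpow one_lt_two hCul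
  have hden : (0 : ℝ) < 2 ^ Cul - 1 := by linarith
  -- M is positive
  have hM : 0 < M := by
    rcases Nat.eq_zero_or_pos M with h0 | h0
    · exfalso
      subst h0
      simp only [dotProduct, Finset.univ_eq_empty, Finset.sum_empty,
        Complex.zero_re, mul_zero, ge_iff_le] at hiv
      linarith
    · exact h0
  have hMpos : (0 : ℝ) < M := by exact_mod_cast hM
  have hqulpos : ∀ m, qul m + σz2 ≠ 0 := fun m => by have := hqul m; positivity
  rw [factor_eq ar σz2 qul hqulpos] at hiv
  -- the old factor is positive
  have hfac : 0 < ∑ m, Complex.normSq (ar m) * (qul m + σz2)⁻¹ := by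
    have : Nonempty (Fin M) := Fin.pos_iff_nonempty.mp hM
    refine Finset.sum_pos (fun m _ => ?_) Finset.univ_nonempty
    have h1 : 0 < Complex.normSq (ar m) := by rw [har m]; positivity
    have h2 : 0 < (qul m + σz2)⁻¹ := by have := hqul m; positivity
    exact mul_pos h1 h2
  -- s is positive
  have hs : 0 < s := by nlinarith
  set qt : ℝ := (1 / (2 ^ Cul - 1)) / M * s + (1 / (2 ^ Cul - 1)) * σz2 with hqt
  have hb : (0:ℝ) < 1 / (2 ^ Cul - 1) := one_div_pos.mpr hden
  have hqtpos : 0 < qt := by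
    rw [hqt]
    exact add_pos (mul_pos (div_pos hb hMpos) hs) (mul_pos hb hσz2)
  -- equality in (iii)
  have heq : s + M * σz2 = (2 ^ Cul - 1) * M * qt := by
    rw [hqt]
    have hd : (2 ^ Cul - 1 : ℝ) ≠ 0 := hden.ne'
    have hm : (M : ℝ) ≠ 0 := hMpos.ne'
    field_simp
  -- qt ≤ qul m
  have hle : ∀ m, qt ≤ qul m := by
    intro m
    have h1 := hiii m
    rw [heq] at h1
    exact le_of_mul_le_mul_left h1 (mul_pos hden hMpos)
  have hqtne : ∀ _m : Fin M, qt + σz2 ≠ 0 := fun _ => by positivity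
  refine ⟨⟨hqdl, fun m => hqtpos.le, hi, hii, fun m => (heq).le, ?_⟩, rfl, fun m => heq,
    fun m => hle m⟩
  -- new sensing SINR constraint
  rw [factor_eq ar σz2 (fun _ => qt) hqtne]
  have hsum : (∑ m, Complex.normSq (ar m) * (qul m + σz2)⁻¹)
      ≤ ∑ m, Complex.normSq (ar m) * (qt + σz2)⁻¹ := by
    refine Finset.sum_le_sum fun m _ => ?_
    have h1 : 0 ≤ Complex.normSq (ar m) := Complex.normSq_nonneg _
    have h2 : 0 < qt + σz2 := by positivity
    have h3 : 0 < qul m + σz2 := by have := hqul m; linarith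
    exact mul_le_mul_of_nonneg_left (one_div (qt + σz2) ▸ one_div (qul m + σz2) ▸
      one_div_le_one_div_of_le h2 (by linarith [hle m])) h1
  calc Γs ≤ s * ∑ m, Complex.normSq (ar m) * (qul m + σz2)⁻¹ := hiv
    _ ≤ s * ∑ m, Complex.normSq (ar m) * (qt + σz2)⁻¹ :=
        mul_le_mul_of_nonneg_left hsum hs.le

end NetworkedISAC
end
end

section
/- (Proposition 4, part 2: positive definiteness of C at dual-feasible points) Let λ ∈ ℝ and μ ∈ ℝ^K with μ_k > 0 for every k. Assume that the vectors h_1,…,h_K span ℂ^N and that μ is feasible for the dual problem (D2), i.e., for every k and every w ∈ ℂ^N one has μ_k·Γ̃_k·|h_kᴴ w|² ≤ Re(wᴴ C(λ,μ) w). Then C(λ,μ) is positive definite. -/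
open Matrix Finset ComplexOrder

noncomputable section

namespace DualPD

variable {N K : ℕ}

/-- `H_k = h_k h_kᴴ`. -/
def Hmat (h : Fin N → ℂ) : Matrix (Fin N) (Fin N) ℂ :=
  vecMulVec h (star h)

/-- `A_k = H_k + α·diag(H_k)`. -/
def Amat (α : ℝ) (h : Fin N → ℂ) : Matrix (Fin N) (Fin N) ℂ :=
  Hmat h + (α : ℂ) • diagonal (fun n => Hmat h n n)

/-- `C(λ,μ) = I − λ·B + ∑ᵢ μᵢ·Aᵢ`. -/
def Cmat (α : ℝ) (h : Fin K → Fin N → ℂ) (B : Matrix (Fin N) (Fin N) ℂ)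
    (lam : ℝ) (μ : Fin K → ℝ) : Matrix (Fin N) (Fin N) ℂ :=
  1 - (lam : ℂ) • B + ∑ i, (μ i : ℂ) • Amat α (h i)

lemma smul_real_isHermitian (r : ℝ) {A : Matrix (Fin N) (Fin N) ℂ} (hA : A.IsHermitian) :
    ((r : ℂ) • A).IsHermitian := by
  unfold Matrix.IsHermitian
  rw [conjTranspose_smul, hA.eq]
  simp

lemma Hmat_isHermitian (h : Fin N → ℂ) : (Hmat h).IsHermitian := by
  ext i j
  simp [Hmat, vecMulVec, Matrix.conjTranspose_apply, mul_comm]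

lemma Amat_isHermitian (α : ℝ) (h : Fin N → ℂ) : (Amat α h).IsHermitian := by
  refine (Hmat_isHermitian h).add (smul_real_isHermitian α ?_)
  refine isHermitian_diagonal_of_self_adjoint _ (funext fun n => ?_)
  simp [Hmat, vecMulVec, _root_.IsSelfAdjoint, mul_comm]

lemma Cmat_isHermitian (α : ℝ) (h : Fin K → Fin N → ℂ) (B : Matrix (Fin N) (Fin N) ℂ)
    (hB : B.IsHermitian) (lam : ℝ) (μ : Fin K → ℝ) : (Cmat α h B lam μ).IsHermitian := by
  refine (Matrix.isHermitian_one.sub (smul_real_isHermitian lam hB)).add ?_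
  unfold Matrix.IsHermitian
  rw [conjTranspose_sum]
  exact Finset.sum_congr rfl fun i _ => (smul_real_isHermitian (μ i) (Amat_isHermitian α (h i))).eq

/-- **Proposition 4, part 2.**  If `μ_k > 0` for every `k`, the vectors `h_1, …, h_K` span
`ℂ^N`, and `μ` is feasible for the dual problem (D2), then `C(λ,μ)` is positive definite. -/
theorem proposition4_part2
    (h : Fin K → Fin N → ℂ) (hh : ∀ k, h k ≠ 0)
    (α : ℝ) (hα : 0 < α) (Γt : Fin K → ℝ) (hΓt : ∀ k, 0 < Γt k)
    (B : Matrix (Fin N) (Fin N) ℂ) (hB : B.IsHermitian)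
    (lam : ℝ) (μ : Fin K → ℝ) (hμ : ∀ k, 0 < μ k)
    (hspan : Submodule.span ℂ (Set.range h) = ⊤)
    (hdual : ∀ k, ∀ wv : Fin N → ℂ,
      μ k * Γt k * Complex.normSq (star (h k) ⬝ᵥ wv) ≤
        (star wv ⬝ᵥ (Cmat α h B lam μ).mulVec wv).re) :
    (Cmat α h B lam μ).PosDef := by
  have hC := Cmat_isHermitian α h B hB lam μ
  refine Matrix.posDef_iff_dotProduct_mulVec.mpr ⟨hC, fun w hw => ?_⟩
  -- there exists k with ⟨h k, w⟩ ≠ 0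
  have hex : ∃ k, star (h k) ⬝ᵥ w ≠ 0 := by
    by_contra hcon
    push_neg at hcon
    apply hw
    let f : (Fin N → ℂ) →ₗ[ℂ] ℂ :=
      { toFun := fun v => star w ⬝ᵥ v
        map_add' := fun a b => dotProduct_add _ _ _
        map_smul' := fun c a => by simp [dotProduct_smul] }
    have hker : Submodule.span ℂ (Set.range h) ≤ LinearMap.ker f := by
      rw [Submodule.span_le]
      rintro _ ⟨k, rfl⟩
      have : star w ⬝ᵥ h k = 0 := by
        rw [star_dotProduct]
        simp [hcon k]
      simpa [f, LinearMap.mem_ker]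
    rw [hspan, top_le_iff] at hker
    have hfw : f w = 0 := by rw [← LinearMap.mem_ker, hker]; trivial
    exact dotProduct_star_self_eq_zero.mp hfw
  obtain ⟨k, hk⟩ := hex
  have hre : 0 < (star w ⬝ᵥ (Cmat α h B lam μ).mulVec w).re := by
    refine lt_of_lt_of_le ?_ (hdual k w)
    have h1 : 0 < Complex.normSq (star (h k) ⬝ᵥ w) := Complex.normSq_pos.mpr hk
    exact mul_pos (mul_pos (hμ k) (hΓt k)) h1
  have him : (star w ⬝ᵥ (Cmat α h B lam μ).mulVec w).im = 0 := by
    have hself : star (star w ⬝ᵥ (Cmat α h B lam μ).mulVec w)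
        = star w ⬝ᵥ (Cmat α h B lam μ).mulVec w := by
      calc star (star w ⬝ᵥ (Cmat α h B lam μ).mulVec w)
          = star ((Cmat α h B lam μ).mulVec w) ⬝ᵥ w := (star_dotProduct _ _).symm
        _ = (star w ᵥ* (Cmat α h B lam μ)ᴴ) ⬝ᵥ w := by rw [star_mulVec]
        _ = star w ⬝ᵥ (Cmat α h B lam μ).mulVec w := by rw [hC.eq, ← dotProduct_mulVec]
    have := congrArg Complex.im hself
    simp only [Complex.star_def, Complex.conj_im] at this
    linarith
  rw [Complex.lt_def]
  exact ⟨by simpa using hre, by simp [him]⟩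

end DualPD
end
end

section
/- (Proposition 5, active SINR constraints at the optimum of (D3)) Let λ ∈ ℝ and define the feasible set F ≜ { μ ∈ ℝ^K : μ ≥ 0, C(λ,μ) is positive definite, and f_k(λ,μ) ≤ 1/Γ̃_k for every k }. If μ* ∈ F satisfies Σ_{k=1}^K μ_k ≤ Σ_{k=1}^K μ*_k for every μ ∈ F (i.e., μ* maximizes the dual objective σ_v²·Σ_k μ_k over F), then f_k(λ,μ*) = 1/Γ̃_k for every k = 1,…,K. -/
open Matrix Finset ComplexOrder

noncomputable section

namespace ActiveD3

variable {N K : ℕ}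

/-- `H_k = h_k h_kᴴ`. -/
def Hmat (h : Fin N → ℂ) : Matrix (Fin N) (Fin N) ℂ :=
  vecMulVec h (star h)

/-- `A_k = H_k + α·diag(H_k)`. -/
def Amat (α : ℝ) (h : Fin N → ℂ) : Matrix (Fin N) (Fin N) ℂ :=
  Hmat h + (α : ℂ) • diagonal (fun n => Hmat h n n)

/-- `C(λ,μ) = I − λ·B + ∑ᵢ μᵢ·Aᵢ`. -/
def Cmat (α : ℝ) (h : Fin K → Fin N → ℂ) (B : Matrix (Fin N) (Fin N) ℂ)
    (lam : ℝ) (μ : Fin K → ℝ) : Matrix (Fin N) (Fin N) ℂ :=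
  1 - (lam : ℂ) • B + ∑ i, (μ i : ℂ) • Amat α (h i)

/-- `f_k(λ,μ) = μ_k · Re(h_kᴴ C(λ,μ)⁻¹ h_k)`. -/
def fdual (α : ℝ) (h : Fin K → Fin N → ℂ) (B : Matrix (Fin N) (Fin N) ℂ)
    (lam : ℝ) (μ : Fin K → ℝ) (k : Fin K) : ℝ :=
  μ k * (star (h k) ⬝ᵥ ((Cmat α h B lam μ)⁻¹).mulVec (h k)).re

/-- The feasible set of problem (D3). -/
def FeasD3 (α : ℝ) (Γt : Fin K → ℝ) (h : Fin K → Fin N → ℂ)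
    (B : Matrix (Fin N) (Fin N) ℂ) (lam : ℝ) : Set (Fin K → ℝ) :=
  {μ | (∀ k, 0 ≤ μ k) ∧ (Cmat α h B lam μ).PosDef ∧
    ∀ k, fdual α h B lam μ k ≤ 1 / Γt k}

section Aux

variable {n : Type*} [Fintype n] [DecidableEq n]

lemma herm_conj {M : Matrix n n ℂ} (hM : M.IsHermitian) (a b : n → ℂ) :
    star (star a ⬝ᵥ M *ᵥ b) = star b ⬝ᵥ M *ᵥ a := by
  rw [star_dotProduct, star_star, star_mulVec, ← dotProduct_mulVec, hM.eq]

/-- Loewner-type monotonicity of the inverse quadratic form: adding a PSD matrix to a PD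
matrix can only decrease the (real part of the) quadratic form of the inverse. -/
lemma inv_quad_mono {C D : Matrix n n ℂ} (hC : C.PosDef) (hD : D.PosSemidef) (x : n → ℂ) :
    (star x ⬝ᵥ (C + D)⁻¹ *ᵥ x).re ≤ (star x ⬝ᵥ C⁻¹ *ᵥ x).re := by
  have hS : (C + D).PosDef := hC.add_posSemidef hD
  set u := C⁻¹ *ᵥ x with hu'
  set z := (C + D)⁻¹ *ᵥ x with hz'
  have hu : C *ᵥ u = x := by
    rw [hu', mulVec_mulVec, mul_nonsing_inv _ ((isUnit_iff_isUnit_det _).mp hC.isUnit),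
      one_mulVec]
  have hz : C *ᵥ z + D *ᵥ z = x := by
    have : (C + D) *ᵥ z = x := by
      rw [hz', mulVec_mulVec, mul_nonsing_inv _ ((isUnit_iff_isUnit_det _).mp hS.isUnit),
        one_mulVec]
    simpa [add_mulVec] using this
  have h1 : star u ⬝ᵥ C *ᵥ u = star (star x ⬝ᵥ u) := by rw [hu, star_dotProduct]
  have h2 : star u ⬝ᵥ C *ᵥ z = star x ⬝ᵥ z := by
    rw [← herm_conj hC.isHermitian z u, hu, star_dotProduct, star_star]
  have h3 : star z ⬝ᵥ C *ᵥ u = star z ⬝ᵥ x := by rw [hu]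
  have h4 : star z ⬝ᵥ C *ᵥ z + star z ⬝ᵥ D *ᵥ z = star z ⬝ᵥ x := by
    rw [← dotProduct_add, hz]
  have h5 : star z ⬝ᵥ x = star (star x ⬝ᵥ z) := star_dotProduct _ _
  have key : star (u - z) ⬝ᵥ C *ᵥ (u - z) + star z ⬝ᵥ D *ᵥ z
      = star (star x ⬝ᵥ u) - star x ⬝ᵥ z := by
    rw [star_sub, sub_dotProduct, mulVec_sub, dotProduct_sub, dotProduct_sub, h1, h2, h3]
    linear_combination h4
  have hw : 0 ≤ (star (u - z) ⬝ᵥ C *ᵥ (u - z)).re := by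
    simpa using hC.posSemidef.re_dotProduct_nonneg (u - z)
  have hzD : 0 ≤ (star z ⬝ᵥ D *ᵥ z).re := by
    simpa using hD.re_dotProduct_nonneg z
  have := congrArg Complex.re key
  simp only [Complex.add_re, Complex.sub_re, Complex.star_def, Complex.conj_re] at this
  linarith

lemma smul_posSemidef {M : Matrix n n ℂ} (hM : M.PosSemidef) {r : ℝ} (hr : 0 ≤ r) :
    ((r : ℂ) • M).PosSemidef := by
  rw [posSemidef_iff_dotProduct_mulVec]
  constructor
  · unfold Matrix.IsHermitian
    rw [conjTranspose_smul, hM.1.eq]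
    simp
  · intro x
    rw [smul_mulVec, dotProduct_smul, smul_eq_mul]
    exact mul_nonneg (by exact_mod_cast hr) (hM.dotProduct_mulVec_nonneg x)

end Aux

lemma Hmat_posSemidef (h : Fin N → ℂ) : (Hmat h).PosSemidef := by
  rw [posSemidef_iff_dotProduct_mulVec]
  constructor
  · unfold Matrix.IsHermitian
    ext i j
    simp [Hmat, vecMulVec_apply, conjTranspose_apply, mul_comm]
  · intro x
    have hform : star x ⬝ᵥ (Hmat h) *ᵥ x = (star x ⬝ᵥ h) * star (star x ⬝ᵥ h) := by
      simp only [Hmat, mulVec, dotProduct, vecMulVec_apply, star_sum, star_mul',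
        star_star, Pi.star_apply, Finset.mul_sum, Finset.sum_mul]
      rw [Finset.sum_comm]
      congr 1; ext i; congr 1; ext j; ring
    rw [hform]
    exact mul_star_self_nonneg _

lemma Amat_posSemidef {α : ℝ} (hα : 0 ≤ α) (h : Fin N → ℂ) : (Amat α h).PosSemidef := by
  refine (Hmat_posSemidef h).add (smul_posSemidef (Matrix.PosSemidef.diagonal ?_) hα)
  intro i
  simpa [Hmat, vecMulVec_apply] using mul_star_self_nonneg (h i)

lemma Cmat_update (α : ℝ) (h : Fin K → Fin N → ℂ) (B : Matrix (Fin N) (Fin N) ℂ)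
    (lam : ℝ) (μ : Fin K → ℝ) (k : Fin K) (ε : ℝ) :
    Cmat α h B lam (Function.update μ k (μ k + ε))
      = Cmat α h B lam μ + (ε : ℂ) • Amat α (h k) := by
  unfold Cmat
  have hterm : ∀ i : Fin K, ((Function.update μ k (μ k + ε) i : ℝ) : ℂ) • Amat α (h i)
      = (μ i : ℂ) • Amat α (h i) + (if i = k then (ε : ℂ) • Amat α (h k) else 0) := by
    intro i
    by_cases hik : i = k
    · subst hik
      simp [Function.update_self, Complex.ofReal_add, add_smul]
    · simp [Function.update_of_ne hik, hik]
  rw [Finset.sum_congr rfl (fun i _ => hterm i), Finset.sum_add_distrib,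
    Finset.sum_ite_eq' Finset.univ k]
  simp only [Finset.mem_univ, if_true]
  rw [add_assoc]

/-- **Proposition 5 (active SINR constraints at the optimum of (D3)).**  If `μ*` maximizes
`∑ₖ μₖ` over the feasible set of (D3), then `f_k(λ,μ*) = 1/Γ̃_k` for every `k`. -/
theorem proposition5
    (h : Fin K → Fin N → ℂ) (hh : ∀ k, h k ≠ 0)
    (α : ℝ) (hα : 0 < α) (Γt : Fin K → ℝ) (hΓt : ∀ k, 0 < Γt k)
    (B : Matrix (Fin N) (Fin N) ℂ) (hB : B.IsHermitian) (lam : ℝ)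
    (μstar : Fin K → ℝ) (hmem : μstar ∈ FeasD3 α Γt h B lam)
    (hopt : ∀ μ ∈ FeasD3 α Γt h B lam, ∑ k, μ k ≤ ∑ k, μstar k) :
    ∀ k, fdual α h B lam μstar k = 1 / Γt k := by
  intro k
  obtain ⟨hμ0, hPD, hfe⟩ := hmem
  by_contra hne
  have hlt : fdual α h B lam μstar k < 1 / Γt k := lt_of_le_of_ne (hfe k) hne
  set g : Fin K → ℝ :=
    fun j => (star (h j) ⬝ᵥ ((Cmat α h B lam μstar)⁻¹).mulVec (h j)).re with hg'
  have hgpos : 0 < g k := by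
    simpa [hg'] using hPD.inv.re_dotProduct_pos (hh k)
  set ε : ℝ := (1 / Γt k - fdual α h B lam μstar k) / g k with hε'
  have hεpos : 0 < ε := div_pos (by linarith) hgpos
  set μ' : Fin K → ℝ := Function.update μstar k (μstar k + ε) with hμ''
  have hCeq : Cmat α h B lam μ' = Cmat α h B lam μstar + (ε : ℂ) • Amat α (h k) :=
    Cmat_update α h B lam μstar k ε
  have hApsd : ((ε : ℂ) • Amat α (h k)).PosSemidef :=
    smul_posSemidef (Amat_posSemidef hα.le (h k)) hεpos.le
  have hPD' : (Cmat α h B lam μ').PosDef := by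
    rw [hCeq]; exact hPD.add_posSemidef hApsd
  have hquad : ∀ j, (star (h j) ⬝ᵥ ((Cmat α h B lam μ')⁻¹).mulVec (h j)).re ≤ g j := by
    intro j
    rw [hCeq, hg']
    exact inv_quad_mono hPD hApsd (h j)
  have hμ'0 : ∀ j, 0 ≤ μ' j := by
    intro j
    by_cases hj : j = k
    · subst hj
      rw [hμ'', Function.update_self]
      have := hμ0 j; linarith
    · rw [hμ'', Function.update_of_ne hj]
      exact hμ0 j
  have hmem' : μ' ∈ FeasD3 α Γt h B lam := by
    refine ⟨hμ'0, hPD', ?_⟩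
    intro j
    by_cases hj : j = k
    · subst hj
      have hupd : μ' j = μstar j + ε := by rw [hμ'', Function.update_self]
      have hb : fdual α h B lam μ' j ≤ (μstar j + ε) * g j := by
        rw [fdual, hupd]
        exact mul_le_mul_of_nonneg_left (hquad j) (by have := hμ0 j; linarith)
      have hεg : ε * g j = 1 / Γt j - fdual α h B lam μstar j := by
        rw [hε']; field_simp
      have : (μstar j + ε) * g j = 1 / Γt j := by
        have hf : fdual α h B lam μstar j = μstar j * g j := rfl
        nlinarith [hεg]
      linarith [hb, this.le]
    · have hupd : μ' j = μstar j := by rw [hμ'', Function.update_of_ne hj]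
      have hb : fdual α h B lam μ' j ≤ μstar j * g j := by
        rw [fdual, hupd]
        exact mul_le_mul_of_nonneg_left (hquad j) (hμ0 j)
      have hf : fdual α h B lam μstar j = μstar j * g j := rfl
      have := hfe j
      linarith
  have hsum := hopt μ' hmem'
  have h1 : ∑ j, μ' j = (μstar k + ε) + ∑ j ∈ Finset.univ.erase k, μstar j := by
    rw [hμ'', Finset.sum_update_of_mem (Finset.mem_univ k), Finset.sdiff_singleton_eq_erase]
  have h2 : μstar k + ∑ j ∈ Finset.univ.erase k, μstar j = ∑ j, μstar j :=
    Finset.add_sum_erase _ _ (Finset.mem_univ k)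
  linarith

end ActiveD3
end
end

section
/- (Active SINR constraints at the optimum of the UL problem (D4), Section IV) Let λ ∈ ℝ and define the feasible set G ≜ { μ ∈ ℝ^K : μ ≥ 0, C(λ,μ) is positive definite, and f_k(λ,μ) ≥ 1/Γ̃_k for every k }. If μ* ∈ G satisfies Σ_{k=1}^K μ*_k ≤ Σ_{k=1}^K μ_k for every μ ∈ G (i.e., μ* minimizes the objective σ_v²·Σ_k μ_k over G), then f_k(λ,μ*) = 1/Γ̃_k for every k = 1,…,K. -/
open Matrix Finset ComplexOrder

noncomputable section

namespace ActiveD4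

section Helpers

variable {n : Type*} [Fintype n] [DecidableEq n]

set_option linter.unusedSectionVars false

lemma herm_dot_real {M : Matrix n n ℂ} (hM : M.IsHermitian) (x : n → ℂ) :
    (star x ⬝ᵥ M *ᵥ x) = ((star x ⬝ᵥ M *ᵥ x).re : ℂ) := by
  have : star (star x ⬝ᵥ M *ᵥ x) = star x ⬝ᵥ M *ᵥ x := by
    rw [← star_dotProduct, star_mulVec, hM.eq, dotProduct_mulVec]
  exact (Complex.conj_eq_iff_re.mp this).symm

lemma quad_decomp {M : Matrix n n ℂ} (hM : M.IsHermitian) (x : n → ℂ) :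
    ∃ t : n → ℝ, (∀ i, 0 ≤ t i) ∧
      (star x ⬝ᵥ M *ᵥ x).re = ∑ i, hM.eigenvalues i * t i ∧
      (star x ⬝ᵥ x).re = ∑ i, t i := by
  set U : Matrix n n ℂ := (hM.eigenvectorUnitary : Matrix n n ℂ) with hU
  set y : n → ℂ := (star U) *ᵥ x with hy
  have hsy : star y = star x ᵥ* U := by
    rw [hy, star_mulVec]; simp [star_eq_conjTranspose]
  refine ⟨fun i => Complex.normSq (y i), fun i => Complex.normSq_nonneg _, ?_, ?_⟩
  · have h1 : star x ⬝ᵥ M *ᵥ x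
        = ∑ i, (hM.eigenvalues i : ℂ) * Complex.normSq (y i) := by
      conv_lhs => rw [hM.spectral_theorem, Unitary.conjStarAlgAut_apply]
      rw [← mulVec_mulVec, ← mulVec_mulVec, dotProduct_mulVec, ← hsy, ← hy]
      simp only [dotProduct, mulVec_diagonal, Function.comp_apply, Pi.star_apply]
      refine Finset.sum_congr rfl fun i _ => ?_
      rw [Complex.normSq_eq_conj_mul_self, Complex.star_def,
        mul_comm ((starRingEnd ℂ) (y i)) _, mul_assoc, mul_comm (y i) _]
      rfl
    rw [h1, Complex.re_sum]
    refine Finset.sum_congr rfl fun i _ => ?_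
    simp
  · have h2 : star x ⬝ᵥ x = ∑ i, (Complex.normSq (y i) : ℂ) := by
      have : star y ⬝ᵥ y = star x ⬝ᵥ x := by
        rw [hsy, hy, ← dotProduct_mulVec, mulVec_mulVec,
          (Matrix.mem_unitaryGroup_iff).mp (hM.eigenvectorUnitary).2, one_mulVec]
      rw [← this]
      simp only [dotProduct, Pi.star_apply]
      exact Finset.sum_congr rfl fun i _ => by
        rw [Complex.normSq_eq_conj_mul_self, Complex.star_def]
    rw [h2, Complex.re_sum]
    simp

lemma re_dot_self_pos {x : n → ℂ} (hx : x ≠ 0) : 0 < (star x ⬝ᵥ x).re := by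
  have h : (star x ⬝ᵥ x).re = ∑ i, Complex.normSq (x i) := by
    simp only [dotProduct, Pi.star_apply, Complex.re_sum]
    exact Finset.sum_congr rfl fun i _ => by
      rw [Complex.star_def, ← Complex.normSq_eq_conj_mul_self, Complex.ofReal_re]
  rw [h]
  obtain ⟨i, hi⟩ := Function.ne_iff.mp hx
  exact Finset.sum_pos' (fun j _ => Complex.normSq_nonneg _)
    ⟨i, Finset.mem_univ i, Complex.normSq_pos.mpr hi⟩

lemma posDef_coercive {M : Matrix n n ℂ} (hM : M.PosDef) :
    ∃ c > 0, ∀ x : n → ℂ, c * (star x ⬝ᵥ x).re ≤ (star x ⬝ᵥ M *ᵥ x).re := by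
  rcases isEmpty_or_nonempty n with hn | hn
  · exact ⟨1, one_pos, fun x => by simp [dotProduct]⟩
  · have hne : (Finset.univ : Finset n).Nonempty := Finset.univ_nonempty
    refine ⟨Finset.univ.inf' hne hM.1.eigenvalues, ?_, fun x => ?_⟩
    · rw [gt_iff_lt, Finset.lt_inf'_iff]
      exact fun i _ => hM.eigenvalues_pos i
    · obtain ⟨t, ht0, h1, h2⟩ := quad_decomp hM.1 x
      rw [h1, h2, Finset.mul_sum]
      exact Finset.sum_le_sum fun i _ =>
        mul_le_mul_of_nonneg_right (Finset.inf'_le _ (Finset.mem_univ i)) (ht0 i)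

lemma psd_upper {A : Matrix n n ℂ} (hA : A.PosSemidef) :
    ∃ a ≥ 0, ∀ x : n → ℂ, (star x ⬝ᵥ A *ᵥ x).re ≤ a * (star x ⬝ᵥ x).re := by
  refine ⟨∑ i, hA.1.eigenvalues i,
    Finset.sum_nonneg fun i _ => hA.eigenvalues_nonneg i, fun x => ?_⟩
  obtain ⟨t, ht0, h1, h2⟩ := quad_decomp hA.1 x
  rw [h1, h2, Finset.mul_sum]
  refine Finset.sum_le_sum fun i _ => mul_le_mul_of_nonneg_right ?_ (ht0 i)
  exact Finset.single_le_sum (fun j _ => hA.eigenvalues_nonneg j) (Finset.mem_univ i)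

lemma herm_sub_real_smul {M A : Matrix n n ℂ} (hM : M.IsHermitian) (hA : A.IsHermitian)
    (δ : ℝ) : (M - (δ : ℂ) • A).IsHermitian := by
  unfold Matrix.IsHermitian
  rw [conjTranspose_sub, conjTranspose_smul, hM.eq, hA.eq, Complex.star_def,
    Complex.conj_ofReal]

lemma sub_smul_posDef {M A : Matrix n n ℂ} (hM : M.PosDef) (hA : A.PosSemidef) :
    ∃ ε0 > 0, ∀ δ : ℝ, 0 < δ → δ ≤ ε0 → (M - (δ : ℂ) • A).PosDef := by
  obtain ⟨c, hc, hcle⟩ := posDef_coercive hM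
  obtain ⟨a, ha, hale⟩ := psd_upper hA
  refine ⟨c / (a + 1), by positivity, fun δ hδ hδε => ?_⟩
  have hherm := herm_sub_real_smul hM.1 hA.1 δ
  refine PosDef.of_dotProduct_mulVec_pos hherm fun x hx => ?_
  rw [herm_dot_real hherm x, Complex.zero_lt_real]
  have e : (star x ⬝ᵥ (M - (δ : ℂ) • A) *ᵥ x).re
      = (star x ⬝ᵥ M *ᵥ x).re - δ * (star x ⬝ᵥ A *ᵥ x).re := by
    rw [sub_mulVec, dotProduct_sub, Complex.sub_re, smul_mulVec, dotProduct_smul,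
      smul_eq_mul, Complex.mul_re, Complex.ofReal_re, Complex.ofReal_im]
    ring
  rw [e]
  have b1 := hcle x
  have b2 := hale x
  have hx2 : 0 < (star x ⬝ᵥ x).re := re_dot_self_pos hx
  have key : δ * a < c := by
    have h1 : δ * a ≤ (c / (a + 1)) * a := mul_le_mul_of_nonneg_right hδε ha
    have h2 : (c / (a + 1)) * a < c := by
      rw [div_mul_eq_mul_div, div_lt_iff₀ (by linarith)]
      nlinarith
    linarith
  have h3 : δ * (star x ⬝ᵥ A *ᵥ x).re ≤ (δ * a) * (star x ⬝ᵥ x).re := by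
    rw [mul_assoc]
    exact mul_le_mul_of_nonneg_left b2 hδ.le
  nlinarith [mul_lt_mul_of_pos_right key hx2]

lemma inv_quad_mono {M D : Matrix n n ℂ} (hM : M.PosDef) (hD : D.PosSemidef)
    (hMD : (M - D).PosDef) (x : n → ℂ) :
    (star x ⬝ᵥ M⁻¹ *ᵥ x).re ≤ (star x ⬝ᵥ (M - D)⁻¹ *ᵥ x).re := by
  set M' : Matrix n n ℂ := M - D with hM'def
  have hMdet := (Matrix.isUnit_iff_isUnit_det M).mp hM.isUnit
  have hM'det := (Matrix.isUnit_iff_isUnit_det M').mp hMD.isUnit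
  have h1 : M⁻¹ * M = 1 := Matrix.nonsing_inv_mul M hMdet
  have h3 : M'⁻¹ * M' = 1 := Matrix.nonsing_inv_mul M' hM'det
  have h2 : M * M⁻¹ = 1 := Matrix.mul_nonsing_inv M hMdet
  have h4 : M' * M'⁻¹ = 1 := Matrix.mul_nonsing_inv M' hM'det
  have hMD' : M = M' + D := by rw [hM'def]; abel
  have E1 : M'⁻¹ = M⁻¹ + M'⁻¹ * (D * M⁻¹) := by
    calc M'⁻¹ = M'⁻¹ * (M * M⁻¹) := by rw [h2, mul_one]
    _ = M'⁻¹ * ((M' + D) * M⁻¹) := by rw [← hMD']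
    _ = M'⁻¹ * (M' * M⁻¹) + M'⁻¹ * (D * M⁻¹) := by rw [add_mul, mul_add]
    _ = M⁻¹ + M'⁻¹ * (D * M⁻¹) := by rw [← mul_assoc M'⁻¹ M' M⁻¹, h3, one_mul]
  have E2 : M'⁻¹ = M⁻¹ + M⁻¹ * (D * M'⁻¹) := by
    calc M'⁻¹ = (M⁻¹ * M) * M'⁻¹ := by rw [h1, one_mul]
    _ = M⁻¹ * (M * M'⁻¹) := by rw [mul_assoc]
    _ = M⁻¹ * (M' * M'⁻¹ + D * M'⁻¹) := by rw [← add_mul, ← hMD']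
    _ = M⁻¹ + M⁻¹ * (D * M'⁻¹) := by rw [h4, mul_add, mul_one]
  have F : M'⁻¹ = M⁻¹ + M⁻¹ * (D * M⁻¹) + M⁻¹ * (D * (M'⁻¹ * (D * M⁻¹))) := by
    conv_lhs => rw [E2]
    conv_lhs => rw [E1]
    rw [mul_add D, mul_add (M⁻¹), ← add_assoc]
  have hMinvH : (M⁻¹).IsHermitian := hM.inv.1
  set z : n → ℂ := M⁻¹ *ᵥ x with hz
  have hsz : star z = star x ᵥ* M⁻¹ := by rw [hz, star_mulVec, hMinvH.eq]
  set w : n → ℂ := D *ᵥ z with hw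
  have hsw : star w = star z ᵥ* D := by rw [hw, star_mulVec, hD.1.eq]
  have k2 : star x ⬝ᵥ (M⁻¹ * (D * M⁻¹)) *ᵥ x = star z ⬝ᵥ D *ᵥ z := by
    rw [← mulVec_mulVec, dotProduct_mulVec, ← hsz, ← mulVec_mulVec, ← hz]
  have k3 : star x ⬝ᵥ (M⁻¹ * (D * (M'⁻¹ * (D * M⁻¹)))) *ᵥ x = star w ⬝ᵥ M'⁻¹ *ᵥ w := by
    calc star x ⬝ᵥ (M⁻¹ * (D * (M'⁻¹ * (D * M⁻¹)))) *ᵥ x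
        = star x ⬝ᵥ M⁻¹ *ᵥ (D *ᵥ (M'⁻¹ *ᵥ (D *ᵥ (M⁻¹ *ᵥ x)))) := by
          rw [mulVec_mulVec, mulVec_mulVec, mulVec_mulVec, mulVec_mulVec]
          simp only [mul_assoc]
    _ = star z ⬝ᵥ D *ᵥ (M'⁻¹ *ᵥ w) := by
          rw [dotProduct_mulVec, ← hsz, ← hz, ← hw]
    _ = star w ⬝ᵥ M'⁻¹ *ᵥ w := by rw [dotProduct_mulVec, ← hsw]
  have key : (star x ⬝ᵥ M'⁻¹ *ᵥ x).re = (star x ⬝ᵥ M⁻¹ *ᵥ x).re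
      + (star z ⬝ᵥ D *ᵥ z).re + (star w ⬝ᵥ M'⁻¹ *ᵥ w).re := by
    conv_lhs => rw [F]
    rw [add_mulVec, add_mulVec, dotProduct_add, dotProduct_add, k2, k3, Complex.add_re,
      Complex.add_re]
  rw [key]
  have t2 := hD.re_dotProduct_nonneg z
  have t3 := (hMD.inv.posSemidef).re_dotProduct_nonneg w
  simp only [RCLike.re_to_complex] at t2 t3
  linarith

lemma posSemidef_vecMulVec (v : n → ℂ) : (vecMulVec v (star v)).PosSemidef := by
  refine PosSemidef.of_dotProduct_mulVec_nonneg ?_ ?_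
  · ext i j
    simp only [conjTranspose_apply, vecMulVec_apply, Pi.star_apply, star_mul', star_star]
    exact mul_comm _ _
  · intro x
    have hmv : (vecMulVec v (star v)) *ᵥ x = (star v ⬝ᵥ x) • v := by
      funext i
      simp only [mulVec, dotProduct, vecMulVec_apply, Pi.star_apply, Pi.smul_apply,
        smul_eq_mul]
      rw [Finset.sum_mul]
      exact Finset.sum_congr rfl fun j _ => by ring
    rw [hmv, dotProduct_smul, smul_eq_mul, star_dotProduct]
    exact star_mul_self_nonneg _

lemma posSemidef_real_smul {A : Matrix n n ℂ} (hA : A.PosSemidef) {r : ℝ} (hr : 0 ≤ r) :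
    ((r : ℂ) • A).PosSemidef := by
  refine PosSemidef.of_dotProduct_mulVec_nonneg ?_ ?_
  · show ((r : ℂ) • A)ᴴ = (r : ℂ) • A
    rw [conjTranspose_smul, hA.1.eq, Complex.star_def, Complex.conj_ofReal]
  · intro x
    rw [smul_mulVec, dotProduct_smul, smul_eq_mul]
    exact mul_nonneg (Complex.zero_le_real.mpr hr) (hA.dotProduct_mulVec_nonneg x)

end Helpers

variable {N K : ℕ}

/-- `H_k = h_k h_kᴴ`. -/
def Hmat (h : Fin N → ℂ) : Matrix (Fin N) (Fin N) ℂ :=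
  vecMulVec h (star h)

/-- `A_k = H_k + α·diag(H_k)`. -/
def Amat (α : ℝ) (h : Fin N → ℂ) : Matrix (Fin N) (Fin N) ℂ :=
  Hmat h + (α : ℂ) • diagonal (fun n => Hmat h n n)

/-- `C(λ,μ) = I − λ·B + ∑ᵢ μᵢ·Aᵢ`. -/
def Cmat (α : ℝ) (h : Fin K → Fin N → ℂ) (B : Matrix (Fin N) (Fin N) ℂ)
    (lam : ℝ) (μ : Fin K → ℝ) : Matrix (Fin N) (Fin N) ℂ :=
  1 - (lam : ℂ) • B + ∑ i, (μ i : ℂ) • Amat α (h i)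

/-- `f_k(λ,μ) = μ_k · Re(h_kᴴ C(λ,μ)⁻¹ h_k)`. -/
def fdual (α : ℝ) (h : Fin K → Fin N → ℂ) (B : Matrix (Fin N) (Fin N) ℂ)
    (lam : ℝ) (μ : Fin K → ℝ) (k : Fin K) : ℝ :=
  μ k * (star (h k) ⬝ᵥ ((Cmat α h B lam μ)⁻¹).mulVec (h k)).re

/-- The feasible set of the UL problem (D4). -/
def FeasD4 (α : ℝ) (Γt : Fin K → ℝ) (h : Fin K → Fin N → ℂ)
    (B : Matrix (Fin N) (Fin N) ℂ) (lam : ℝ) : Set (Fin K → ℝ) :=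
  {μ | (∀ k, 0 ≤ μ k) ∧ (Cmat α h B lam μ).PosDef ∧
    ∀ k, 1 / Γt k ≤ fdual α h B lam μ k}

lemma amat_posSemidef (α : ℝ) (hα : 0 ≤ α) (v : Fin N → ℂ) : (Amat α v).PosSemidef := by
  refine PosSemidef.add (posSemidef_vecMulVec v) (posSemidef_real_smul ?_ hα)
  apply PosSemidef.diagonal
  intro i
  simpa [Hmat, vecMulVec_apply] using mul_star_self_nonneg (v i)

lemma cmat_update (α : ℝ) (h : Fin K → Fin N → ℂ) (B : Matrix (Fin N) (Fin N) ℂ)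
    (lam : ℝ) (μ : Fin K → ℝ) (k : Fin K) (ε : ℝ) :
    Cmat α h B lam (Function.update μ k (μ k - ε))
      = Cmat α h B lam μ - (ε : ℂ) • Amat α (h k) := by
  unfold Cmat
  have hs : ∑ i, ((Function.update μ k (μ k - ε) i : ℝ) : ℂ) • Amat α (h i)
      = (∑ i, (μ i : ℂ) • Amat α (h i)) - (ε : ℂ) • Amat α (h k) := by
    have hterm : ∀ i ∈ Finset.univ, ((Function.update μ k (μ k - ε) i : ℝ) : ℂ) • Amat α (h i)
        = (μ i : ℂ) • Amat α (h i) - (if i = k then (ε : ℂ) • Amat α (h k) else 0) := by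
      intro i _
      by_cases hik : i = k
      · subst hik
        rw [Function.update_self, if_pos rfl]
        push_cast
        rw [sub_smul]
      · rw [Function.update_of_ne hik, if_neg hik, sub_zero]
    rw [Finset.sum_congr rfl hterm, Finset.sum_sub_distrib, Finset.sum_ite_eq' Finset.univ k]
    simp
  rw [hs]
  abel

/-- **Active SINR constraints at the optimum of the UL problem (D4), Section IV.**  If `μ*` minimizes
`∑ₖ μₖ` over the feasible set of (D4), then `f_k(λ,μ*) = 1/Γ̃_k` for every `k`. -/
theorem activeD4
    (h : Fin K → Fin N → ℂ) (hh : ∀ k, h k ≠ 0)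
    (α : ℝ) (hα : 0 < α) (Γt : Fin K → ℝ) (hΓt : ∀ k, 0 < Γt k)
    (B : Matrix (Fin N) (Fin N) ℂ) (hB : B.IsHermitian) (lam : ℝ)
    (μstar : Fin K → ℝ) (hmem : μstar ∈ FeasD4 α Γt h B lam)
    (hopt : ∀ μ ∈ FeasD4 α Γt h B lam, ∑ k, μstar k ≤ ∑ k, μ k) :
    ∀ k, fdual α h B lam μstar k = 1 / Γt k := by
  obtain ⟨hnn, hPD, hge⟩ := hmem
  intro k
  refine le_antisymm ?_ (hge k)
  by_contra hcon
  push_neg at hcon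
  set C : Matrix (Fin N) (Fin N) ℂ := Cmat α h B lam μstar with hC
  set q0 : ℝ := (star (h k) ⬝ᵥ C⁻¹ *ᵥ (h k)).re with hq0
  have hfk : fdual α h B lam μstar k = μstar k * q0 := rfl
  have hpos : 0 < 1 / Γt k := one_div_pos.mpr (hΓt k)
  have hμq : 1 / Γt k < μstar k * q0 := by rw [← hfk]; exact hcon
  have hμk : 0 < μstar k := by
    rcases (hnn k).lt_or_eq with hlt | heq
    · exact hlt
    · exfalso
      rw [← heq, zero_mul] at hμq
      linarith
  have hq0pos : 0 < q0 := by
    by_contra hq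
    push_neg at hq
    nlinarith [mul_nonneg (hnn k) (neg_nonneg.mpr hq)]
  have hApsd : (Amat α (h k)).PosSemidef := amat_posSemidef α hα.le (h k)
  obtain ⟨ε0, hε0, hεPD⟩ := sub_smul_posDef hPD hApsd
  obtain ⟨δ, hδ⟩ : ∃ d : ℝ, d = μstar k - 1 / (Γt k * q0) := ⟨_, rfl⟩
  have hδpos : 0 < δ := by
    rw [hδ, sub_pos, div_lt_iff₀ (mul_pos (hΓt k) hq0pos)]
    have := (div_lt_iff₀ (hΓt k)).mp hμq
    nlinarith
  obtain ⟨ε, hεdef⟩ : ∃ e : ℝ, e = min ε0 δ := ⟨_, rfl⟩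
  have hεpos : 0 < ε := hεdef ▸ lt_min hε0 hδpos
  have hεδ : ε ≤ δ := hεdef ▸ min_le_right _ _
  obtain ⟨μ', hμ'⟩ : ∃ m : Fin K → ℝ, m = Function.update μstar k (μstar k - ε) := ⟨_, rfl⟩
  have hCsub : Cmat α h B lam μ' = C - (ε : ℂ) • Amat α (h k) := by
    rw [hμ']; exact cmat_update α h B lam μstar k ε
  have hPD'' : (C - (ε : ℂ) • Amat α (h k)).PosDef := hεPD ε hεpos (hεdef ▸ min_le_left _ _)
  have hPD' : (Cmat α h B lam μ').PosDef := by rw [hCsub]; exact hPD''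
  have hDsmul : ((ε : ℂ) • Amat α (h k)).PosSemidef := posSemidef_real_smul hApsd hεpos.le
  have hmono : ∀ x : Fin N → ℂ,
      (star x ⬝ᵥ C⁻¹ *ᵥ x).re ≤ (star x ⬝ᵥ (Cmat α h B lam μ')⁻¹ *ᵥ x).re := by
    intro x
    rw [hCsub]
    exact inv_quad_mono hPD hDsmul hPD'' x
  have hμ'k : μ' k = μstar k - ε := by rw [hμ', Function.update_self]
  have hμ'kge : 1 / (Γt k * q0) ≤ μ' k := by
    rw [hμ'k]
    have : 1 / (Γt k * q0) = μstar k - δ := by rw [hδ]; ring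
    linarith
  have hinvq0 : 0 < 1 / (Γt k * q0) := one_div_pos.mpr (mul_pos (hΓt k) hq0pos)
  have hμ'nonneg : ∀ j, 0 ≤ μ' j := by
    intro j
    by_cases hj : j = k
    · subst hj; linarith
    · rw [hμ', Function.update_of_ne hj]; exact hnn j
  have hfeas : μ' ∈ FeasD4 α Γt h B lam := by
    refine ⟨hμ'nonneg, hPD', fun j => ?_⟩
    by_cases hj : j = k
    · subst hj
      have hquad : q0 ≤ (star (h j) ⬝ᵥ (Cmat α h B lam μ')⁻¹ *ᵥ (h j)).re := hmono (h j)
      have hq0' : (0:ℝ) ≤ q0 := hq0pos.le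
      show 1 / Γt j ≤ μ' j * (star (h j) ⬝ᵥ (Cmat α h B lam μ')⁻¹ *ᵥ (h j)).re
      calc 1 / Γt j = (1 / (Γt j * q0)) * q0 := by
            rw [one_div, one_div, mul_inv, mul_assoc, inv_mul_cancel₀ (ne_of_gt hq0pos),
              mul_one]
      _ ≤ μ' j * (star (h j) ⬝ᵥ (Cmat α h B lam μ')⁻¹ *ᵥ (h j)).re :=
            mul_le_mul hμ'kge hquad hq0' (le_trans hinvq0.le hμ'kge)
    · have hquadj : (star (h j) ⬝ᵥ C⁻¹ *ᵥ (h j)).re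
          ≤ (star (h j) ⬝ᵥ (Cmat α h B lam μ')⁻¹ *ᵥ (h j)).re := hmono (h j)
      have hμ'j : μ' j = μstar j := by rw [hμ', Function.update_of_ne hj]
      have h0 : 1 / Γt j ≤ μstar j * (star (h j) ⬝ᵥ C⁻¹ *ᵥ (h j)).re := hge j
      show 1 / Γt j ≤ μ' j * (star (h j) ⬝ᵥ (Cmat α h B lam μ')⁻¹ *ᵥ (h j)).re
      rw [hμ'j]
      exact le_trans h0 (mul_le_mul_of_nonneg_left hquadj (hnn j))
  have hsum := hopt μ' hfeas
  have hsum' : ∑ j, μ' j = (∑ j, μstar j) - ε := by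
    have h5 := Finset.sum_eq_sum_sdiff_singleton_add (Finset.mem_univ k) μstar
    rw [hμ', Finset.sum_update_of_mem (Finset.mem_univ k), h5]
    ring
  rw [hsum'] at hsum
  linarith

end ActiveD4
end
end
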